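/- Let b ≥ 1 be an integer and let p be a sensor-deployment distribution. Then d_min(p) = √p_{2b}/(2b+1) holds if and only if √p_i = (i+1)·√p_{2b}/(2b+1) for all 0 ≤ i ≤ 2b, and in that case the normalization Σ_{i=0}^{2b} p_i = 1 forces p_i = 3(i+1)²/((b+1)(2b+1)(4b+3)) for all 0 ≤ i ≤ 2b. -/

import Mathlib

open Finset Real

/-- The "gap" vector: `d 0 = √p₀`, `d i = √pᵢ - √p_{i-1}` for `i ≥ 1`. -/
noncomputable def dvec (p : ℕ → ℝ) (i : ℕ) : ℝ :=
  if i = 0 then Real.sqrt (p 0) else Real.sqrt (p i) - Real.sqrt (p (i - 1))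

/-- `d_min(p) = min_{0 ≤ i ≤ 2b} d_i(p)`. -/
noncomputable def dmin (b : ℕ) (p : ℕ → ℝ) : ℝ :=
  (Finset.range (2 * b + 1)).inf' (Finset.nonempty_range_iff.mpr (by omega)) (dvec p)

/-- A sensor-deployment distribution: `0 < p₀ < p₁ < ⋯ < p_{2b}` and `∑ pᵢ = 1`. -/
def IsSensorDist (b : ℕ) (p : ℕ → ℝ) : Prop :=
  0 < p 0 ∧ (∀ i, i < 2 * b → p i < p (i + 1)) ∧ ∑ i ∈ Finset.range (2 * b + 1), p i = 1

lemma dvec_sum (p : ℕ → ℝ) (n : ℕ) :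
    ∑ i ∈ Finset.range (n + 1), dvec p i = Real.sqrt (p n) := by
  induction n with
  | zero => simp [dvec]
  | succ n ih => rw [Finset.sum_range_succ, ih]; simp [dvec]

lemma sum_sq' (n : ℕ) :
    ∑ i ∈ Finset.range n, ((i : ℝ) + 1) ^ 2
      = (n : ℝ) * ((n : ℝ) + 1) * (2 * (n : ℝ) + 1) / 6 := by
  induction n with
  | zero => simp
  | succ n ih =>
    rw [Finset.sum_range_succ, ih]
    push_cast
    field_simp
    ring

theorem dmin_eq_bound_iff (b : ℕ) (hb : 1 ≤ b) (p : ℕ → ℝ) (hp : IsSensorDist b p) :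
    (dmin b p = Real.sqrt (p (2 * b)) / (2 * (b : ℝ) + 1) ↔
      ∀ i ≤ 2 * b,
        Real.sqrt (p i) = ((i : ℝ) + 1) * Real.sqrt (p (2 * b)) / (2 * (b : ℝ) + 1)) ∧
    (dmin b p = Real.sqrt (p (2 * b)) / (2 * (b : ℝ) + 1) →
      ∀ i ≤ 2 * b,
        p i = 3 * ((i : ℝ) + 1) ^ 2 /
          (((b : ℝ) + 1) * (2 * (b : ℝ) + 1) * (4 * (b : ℝ) + 3))) := by
  obtain ⟨h0, hmono, hsum⟩ := hp
  have hpos : ∀ i ≤ 2 * b, 0 < p i := by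
    intro i hi
    induction i with
    | zero => exact h0
    | succ n ih => exact lt_trans (ih (by omega)) (hmono n (by omega))
  set M := Real.sqrt (p (2 * b)) with hM
  have hNpos : (0 : ℝ) < 2 * (b : ℝ) + 1 := by positivity
  have key : dmin b p = M / (2 * (b : ℝ) + 1) ↔
      ∀ i ≤ 2 * b, Real.sqrt (p i) = ((i : ℝ) + 1) * M / (2 * (b : ℝ) + 1) := by
    constructor
    · intro hd
      have hle : ∀ i ∈ Finset.range (2 * b + 1), M / (2 * (b : ℝ) + 1) ≤ dvec p i := by
        intro i hi
        rw [← hd]; exact Finset.inf'_le _ hi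
      have hsum' : ∑ i ∈ Finset.range (2 * b + 1), (M / (2 * (b : ℝ) + 1))
          = ∑ i ∈ Finset.range (2 * b + 1), dvec p i := by
        rw [dvec_sum, Finset.sum_const, Finset.card_range, nsmul_eq_mul]
        push_cast
        field_simp
        exact hM
      have heq := (Finset.sum_eq_sum_iff_of_le hle).mp hsum'
      intro i hi
      induction i with
      | zero =>
        have h1 : Real.sqrt (p 0) = M / (2 * (b : ℝ) + 1) := by
          simpa [dvec] using (heq 0 (Finset.mem_range.mpr (by omega))).symm
        rw [h1]; push_cast; ring
      | succ n ih =>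
        have h1 : M / (2 * (b : ℝ) + 1) = Real.sqrt (p (n + 1)) - Real.sqrt (p n) := by
          simpa [dvec] using heq (n + 1) (Finset.mem_range.mpr (by omega))
        have h2 := ih (by omega)
        have h3 : Real.sqrt (p (n + 1)) = Real.sqrt (p n) + M / (2 * (b : ℝ) + 1) := by
          linarith
        rw [h3, h2]; push_cast; ring
    · intro hs
      have hd : ∀ i ∈ Finset.range (2 * b + 1), dvec p i = M / (2 * (b : ℝ) + 1) := by
        intro i hi
        rw [Finset.mem_range] at hi
        cases i with
        | zero =>
          have h1 : dvec p 0 = Real.sqrt (p 0) := by simp [dvec]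
          rw [h1, hs 0 (by omega)]; push_cast; ring
        | succ j =>
          simp only [dvec, Nat.succ_ne_zero, if_false, Nat.add_sub_cancel]
          rw [hs (j + 1) (by omega), hs j (by omega)]; push_cast; ring
      have h1 : dmin b p ≤ M / (2 * (b : ℝ) + 1) := by
        calc dmin b p ≤ dvec p 0 := Finset.inf'_le _ (Finset.mem_range.mpr (by omega))
        _ = M / (2 * (b : ℝ) + 1) := hd 0 (Finset.mem_range.mpr (by omega))
      have h2 : M / (2 * (b : ℝ) + 1) ≤ dmin b p :=
        Finset.le_inf' _ _ (fun i hi => (hd i hi).ge)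
      linarith
  refine ⟨key, ?_⟩
  intro hd i hi
  have hs := key.mp hd
  have hsq : ∀ j ≤ 2 * b, p j = (((j : ℝ) + 1) * M / (2 * (b : ℝ) + 1)) ^ 2 := by
    intro j hj
    rw [← hs j hj, Real.sq_sqrt (hpos j hj).le]
  have h1 : ∑ j ∈ Finset.range (2 * b + 1), (((j : ℝ) + 1) * M / (2 * (b : ℝ) + 1)) ^ 2 = 1 := by
    refine Eq.trans (Finset.sum_congr rfl fun j hj => ?_) hsum
    rw [Finset.mem_range] at hj
    exact (hsq j (by omega)).symm
  have h2 : (M / (2 * (b : ℝ) + 1)) ^ 2 * (∑ j ∈ Finset.range (2 * b + 1), ((j : ℝ) + 1) ^ 2) = 1 := by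
    rw [Finset.mul_sum]
    refine Eq.trans (Finset.sum_congr rfl fun j _ => ?_) h1
    ring
  rw [sum_sq'] at h2
  push_cast at h2
  rw [hsq i hi]
  have hb' : (1 : ℝ) ≤ (b : ℝ) := by exact_mod_cast hb
  have hM2 : M ^ 2 = 3 * (2 * (b : ℝ) + 1) / (((b : ℝ) + 1) * (4 * (b : ℝ) + 3)) := by
    have hd1 : ((b : ℝ) + 1) * (4 * (b : ℝ) + 3) ≠ 0 := by positivity
    field_simp at h2 ⊢
    nlinarith [h2]
  rw [div_pow, mul_pow, hM2]
  field_simp
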